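/- Let f : ℝ → ℝ be strictly convex and differentiable with minimizer x_f on {x : g(x) < 0}, and for τ > 0 let x_τ minimize F_τ(x) = f(x) - (α/τ)·ln(-g(x)) over {x : g(x) < 0}, where g is convex differentiable and α > 0. Then f(x_τ) - f(x*) ≤ α/τ, where x* minimizes f subject to g(x) ≤ 0. In particular, as τ → ∞, f(x_τ) → f(x*). -/

import Mathlib

open Filter

private lemma convex_global_min (h : ℝ → ℝ) (hc : ConvexOn ℝ Set.univ h)
    (hd : Differentiable ℝ h) (x0 : ℝ) (h0 : deriv h x0 = 0) : ∀ y, h x0 ≤ h y := by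
  intro y
  rcases lt_trichotomy x0 y with hlt | heq | hgt
  · have := hc.deriv_le_slope (Set.mem_univ x0) (Set.mem_univ y) hlt (hd x0)
    rw [h0, slope_def_field] at this
    have hy : 0 < y - x0 := by linarith
    rcases div_nonneg_iff.mp this with ⟨h1, _⟩ | ⟨_, h2⟩ <;> linarith
  · rw [heq]
  · have := hc.slope_le_deriv (Set.mem_univ y) (Set.mem_univ x0) hgt (hd x0)
    rw [h0, slope_def_field] at this
    have hy : 0 < x0 - y := by linarith
    have := (div_nonpos_iff.mp (by simpa using this))
    rcases this with ⟨h1, h2⟩ | ⟨h1, h2⟩ <;> nlinarith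

private lemma key_bound (f g : ℝ → ℝ) (α : ℝ) (hα : 0 < α)
    (hf : StrictConvexOn ℝ Set.univ f) (hfd : Differentiable ℝ f)
    (hg : ConvexOn ℝ Set.univ g) (hgd : Differentiable ℝ g)
    (xs : ℝ) (hxs_feas : g xs ≤ 0)
    (c : ℝ) (hc : 0 < c) (z : ℝ) (hz : g z < 0)
    (hmin : ∀ x, g x < 0 →
        f z - c * Real.log (-(g z)) ≤ f x - c * Real.log (-(g x))) :
    f z - f xs ≤ c := by
  set F : ℝ → ℝ := fun x => f x - c * Real.log (-(g x)) with hF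
  -- F has a local min at z
  have hopen : IsOpen {x : ℝ | g x < 0} := isOpen_lt hgd.continuous continuous_const
  have hloc : IsLocalMin F z := by
    filter_upwards [hopen.mem_nhds hz] with x hx using hmin x hx
  have hb : -(g z) > 0 := by linarith
  have hlog : HasDerivAt (fun x => Real.log (-(g x))) ((-(deriv g z)) / (-(g z))) z :=
    ((hgd z).hasDerivAt.neg).log (ne_of_gt hb)
  have hFd : HasDerivAt F (deriv f z - c * ((-(deriv g z)) / (-(g z)))) z :=
    (hfd z).hasDerivAt.sub (hlog.const_mul c)
  have hderiv0 : deriv f z - c * ((-(deriv g z)) / (-(g z))) = 0 := by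
    have := hloc.deriv_eq_zero
    rwa [hFd.deriv] at this
  set lam : ℝ := c / (-(g z)) with hlam
  have hlam_nonneg : 0 ≤ lam := le_of_lt (div_pos hc hb)
  have hstat : deriv f z + lam * deriv g z = 0 := by
    have hgz : g z ≠ 0 := by linarith
    rw [hlam]
    have e : c / -g z * deriv g z = -(c * (-deriv g z / -g z)) := by ring
    linarith
  set L : ℝ → ℝ := fun x => f x + lam * g x with hL
  have hLc : ConvexOn ℝ Set.univ L := hf.convexOn.add (hg.smul hlam_nonneg)
  have hLd : Differentiable ℝ L := hfd.add ((hgd.const_mul lam))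
  have hLderiv : deriv L z = 0 := by
    have : HasDerivAt L (deriv f z + lam * deriv g z) z :=
      (hfd z).hasDerivAt.add ((hgd z).hasDerivAt.const_mul lam)
    rw [this.deriv, hstat]
  have hmin2 := convex_global_min L hLc hLd z hLderiv xs
  have h1 : lam * g z = -c := by
    rw [hlam, div_mul_eq_mul_div, div_eq_iff (by linarith)]; ring
  have h2 : lam * g xs ≤ 0 := mul_nonpos_of_nonneg_of_nonpos hlam_nonneg hxs_feas
  simp only [hL] at hmin2
  linarith

/-- Interior-point suboptimality bound: if `x* ` minimizes `f` subject to
`g ≤ 0` and `x_τ` minimizes the barrier objective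
`f(x) - (α/τ)·ln(-g(x))` over `{g < 0}`, then `f(x_τ) - f(x*) ≤ α/τ`; in
particular `f(x_τ) → f(x*)` as `τ → ∞`. -/
theorem barrier_suboptimality (f g : ℝ → ℝ) (α : ℝ) (hα : 0 < α)
    (hf : StrictConvexOn ℝ Set.univ f) (hfd : Differentiable ℝ f)
    (hg : ConvexOn ℝ Set.univ g) (hgd : Differentiable ℝ g)
    (hslater : ∃ x : ℝ, g x < 0)
    (xs : ℝ) (hxs_feas : g xs ≤ 0) (hxs_opt : ∀ x, g x ≤ 0 → f xs ≤ f x)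
    (xτ : ℝ → ℝ)
    (hxτ : ∀ τ : ℝ, 0 < τ → g (xτ τ) < 0 ∧
      ∀ x, g x < 0 →
        f (xτ τ) - (α / τ) * Real.log (-(g (xτ τ))) ≤
          f x - (α / τ) * Real.log (-(g x))) :
    (∀ τ : ℝ, 0 < τ → f (xτ τ) - f xs ≤ α / τ) ∧
    Tendsto (fun τ => f (xτ τ)) atTop (nhds (f xs)) := by
  have hbound : ∀ τ : ℝ, 0 < τ → f (xτ τ) - f xs ≤ α / τ := by
    intro τ hτ
    obtain ⟨hfeas, hmin⟩ := hxτ τ hτ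
    exact key_bound f g α hα hf hfd hg hgd xs hxs_feas (α / τ) (div_pos hα hτ)
      (xτ τ) hfeas hmin
  refine ⟨hbound, ?_⟩
  have hupper : Tendsto (fun τ => f xs + α / τ) atTop (nhds (f xs)) := by
    have : Tendsto (fun τ : ℝ => α / τ) atTop (nhds 0) :=
      Tendsto.div_atTop tendsto_const_nhds tendsto_id
    simpa using tendsto_const_nhds.add this
  refine tendsto_of_tendsto_of_tendsto_of_le_of_le' tendsto_const_nhds hupper ?_ ?_
  · filter_upwards [eventually_gt_atTop (0 : ℝ)] with τ hτ
    exact hxs_opt _ (le_of_lt (hxτ τ hτ).1)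
  · filter_upwards [eventually_gt_atTop (0 : ℝ)] with τ hτ
    linarith [hbound τ hτ]
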